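/- (Lemma 3.1: vanishing of the A-type Jackson integral on the diagonal.) Suppose τ is not a positive integer. Let x=(x₁,…,xₙ)∈(ℂ∖{0})ⁿ be such that the bilateral series defining I(x) converges absolutely and all summands Ψ_x(ν) are well-defined (no vanishing denominators), and suppose x_i = x_j for some 1≤i<j≤n, with the chosen branch values of the powers of x_i and x_j also equal. Then I(x₁,…,xₙ)=0. -/

import Mathlib

open scoped BigOperators

/-- `q^c := exp(c · log q)` with the real branch of `log q`. -/
noncomputable def qpow (q : ℝ) (c : ℂ) : ℂ := Complex.exp (c * (Real.log q : ℂ))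

/-- `(a)_∞ := ∏_{i=0}^∞ (1 - q^i a)`. -/
noncomputable def poch (q : ℝ) (a : ℂ) : ℂ := ∏' i : ℕ, (1 - (q : ℂ) ^ i * a)

/-- `θ(a) := (a)_∞ (q/a)_∞`. -/
noncomputable def qtheta (q : ℝ) (a : ℂ) : ℂ := poch q a * poch q ((q : ℂ) / a)

/-- The summand `Ψ_x(ν)` of the Jackson integral of A-type; the base point `x` is given
through branch logarithms `l` (so `x i = exp (l i)` and the branch `x i ^ c = exp (c * l i)`). -/
noncomputable def Apsi (q : ℝ) (n : ℕ) (α τ a₁ b₁ : ℂ) (l : Fin n → ℂ) (ν : Fin n → ℤ) : ℂ :=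
  (∏ i : Fin n,
      Complex.exp (α * l i) * qpow q α ^ ν i *
        (poch q ((q : ℂ) * a₁⁻¹ * (Complex.exp (l i) * (q : ℂ) ^ ν i)) /
          poch q (b₁ * (Complex.exp (l i) * (q : ℂ) ^ ν i)))) *
  (∏ i : Fin n, ∏ j ∈ Finset.Ioi i,
      Complex.exp ((2 * τ - 1) * l i) * qpow q (2 * τ - 1) ^ ν i *
        (poch q (qpow q (1 - τ) *
            (Complex.exp (l j) * (q : ℂ) ^ ν j / (Complex.exp (l i) * (q : ℂ) ^ ν i))) /
          poch q (qpow q τ *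
            (Complex.exp (l j) * (q : ℂ) ^ ν j / (Complex.exp (l i) * (q : ℂ) ^ ν i))))) *
  (∏ i : Fin n, ∏ j ∈ Finset.Ioi i,
      (Complex.exp (l i) * (q : ℂ) ^ ν i - Complex.exp (l j) * (q : ℂ) ^ ν j))

/-- The Jackson integral of A-type `I(x) = (1-q)^n Σ_{ν ∈ ℤⁿ} Ψ_x(ν)`. -/
noncomputable def AInt (q : ℝ) (n : ℕ) (α τ a₁ b₁ : ℂ) (l : Fin n → ℂ) : ℂ :=
  ((1 : ℂ) - (q : ℂ)) ^ n * ∑' ν : Fin n → ℤ, Apsi q n α τ a₁ b₁ l ν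

/-- All summands of `I(x)` are well defined: no vanishing denominators. -/
def AWellDef (q : ℝ) (n : ℕ) (τ b₁ : ℂ) (l : Fin n → ℂ) : Prop :=
  ∀ ν : Fin n → ℤ,
    (∀ i : Fin n, poch q (b₁ * (Complex.exp (l i) * (q : ℂ) ^ ν i)) ≠ 0) ∧
    (∀ i j : Fin n, i < j →
      poch q (qpow q τ *
        (Complex.exp (l j) * (q : ℂ) ^ ν j / (Complex.exp (l i) * (q : ℂ) ^ ν i))) ≠ 0)

lemma qpow_add (q : ℝ) (c d : ℂ) : qpow q (c + d) = qpow q c * qpow q d := by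
  simp [qpow, add_mul, Complex.exp_add]

lemma qpow_ne_zero (q : ℝ) (c : ℂ) : qpow q c ≠ 0 := Complex.exp_ne_zero _

lemma qpow_zero (q : ℝ) : qpow q 0 = 1 := by simp [qpow]

lemma qpow_intCast (q : ℝ) (hq0 : 0 < q) (m : ℤ) : qpow q (m : ℂ) = (q : ℂ) ^ m := by
  have h : Complex.exp ((Real.log q : ℂ)) = (q : ℂ) := by
    rw [← Complex.ofReal_exp, Real.exp_log hq0]
  rw [qpow, Complex.exp_int_mul, h]

lemma qpow_zpow (q : ℝ) (c : ℂ) (m : ℤ) : qpow q c ^ m = qpow q ((m : ℂ) * c) := by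
  rw [qpow, qpow, ← Complex.exp_int_mul, mul_assoc]

lemma multipliable_poch (q : ℝ) (hq0 : 0 < q) (hq1 : q < 1) (a : ℂ) :
    Multipliable (fun i : ℕ => 1 - (q : ℂ) ^ i * a) := by
  by_cases hz : ∃ i : ℕ, 1 - (q : ℂ) ^ i * a = 0
  · obtain ⟨i₀, hi₀⟩ := hz
    refine ⟨0, ?_⟩
    have : ∀ᶠ s : Finset ℕ in Filter.atTop, (∏ i ∈ s, (1 - (q : ℂ) ^ i * a)) = 0 := by
      filter_upwards [Filter.eventually_ge_atTop {i₀}] with s hs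
      exact Finset.prod_eq_zero (hs (Finset.mem_singleton_self i₀)) hi₀
    exact Filter.Tendsto.congr' (this.mono fun s hs => hs.symm) tendsto_const_nhds
  · push_neg at hz
    refine Complex.multipliable_of_summable_log ?_
    have hsum : Summable (fun i : ℕ => 3/2 * ‖a‖ * q ^ i) :=
      (summable_geometric_of_lt_one hq0.le hq1).mul_left _
    refine Summable.of_norm_bounded_eventually_nat hsum ?_
    have ht : Filter.Tendsto (fun i : ℕ => ‖a‖ * q ^ i) Filter.atTop (nhds 0) := by
      simpa using (tendsto_pow_atTop_nhds_zero_of_lt_one hq0.le hq1).const_mul (‖a‖)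
    filter_upwards [ht.eventually_le_const (by norm_num : (0:ℝ) < 1/2)] with i hi
    have h1 : 1 - (q : ℂ) ^ i * a = 1 + (-((q:ℂ) ^ i * a)) := by ring
    rw [h1]
    have hb : ‖-((q:ℂ) ^ i * a)‖ ≤ 1/2 := by
      rw [norm_neg]
      calc ‖(q:ℂ) ^ i * a‖ = q ^ i * ‖a‖ := by
            simp [norm_mul, norm_pow, abs_of_pos hq0,
              Complex.norm_real, Real.norm_eq_abs]
        _ ≤ 1/2 := by rw [mul_comm]; exact hi
    calc ‖Complex.log (1 + -((q:ℂ) ^ i * a))‖ ≤ 3/2 * ‖-((q:ℂ) ^ i * a)‖ :=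
          Complex.norm_log_one_add_half_le_self hb
      _ = 3/2 * ‖a‖ * q ^ i := by
          rw [norm_neg]
          simp [norm_mul, norm_pow, abs_of_pos hq0, Complex.norm_real, Real.norm_eq_abs]
          ring

lemma poch_shift (q : ℝ) (hq0 : 0 < q) (hq1 : q < 1) (m : ℕ) (a : ℂ) :
    poch q a = (∏ k ∈ Finset.range m, (1 - (q : ℂ) ^ k * a)) * poch q ((q : ℂ) ^ m * a) := by
  have hm : Multipliable (fun i : ℕ => (fun i : ℕ => 1 - (q:ℂ) ^ i * a) (i + m)) := by
    have := multipliable_poch q hq0 hq1 ((q:ℂ) ^ m * a)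
    refine this.congr fun i => ?_
    simp only [pow_add]
    ring
  have := Multipliable.prod_mul_tprod_nat_mul' (f := fun i : ℕ => 1 - (q:ℂ) ^ i * a) (k := m) hm
  rw [poch, ← this]
  congr 1
  rw [poch]
  refine tprod_congr fun i => ?_
  simp only [pow_add]
  ring

lemma poch_shift_neg (q : ℝ) (hq0 : 0 < q) (hq1 : q < 1) (m : ℕ) (b : ℂ) :
    poch q ((q : ℂ) ^ (-(m : ℤ)) * b)
      = (∏ k ∈ Finset.range m, (1 - (q : ℂ) ^ ((k : ℤ) - (m : ℤ)) * b)) * poch q b := by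
  have hq : (q : ℂ) ≠ 0 := by exact_mod_cast hq0.ne'
  have h := poch_shift q hq0 hq1 m ((q : ℂ) ^ (-(m : ℤ)) * b)
  rw [h]
  congr 1
  · refine Finset.prod_congr rfl fun k _ => ?_
    rw [← mul_assoc, ← zpow_natCast (q:ℂ) k, ← zpow_add₀ hq]
    ring_nf
  · congr 1
    rw [← mul_assoc, ← zpow_natCast (q:ℂ) m, ← zpow_add₀ hq]
    simp

lemma core_id (q' Q u v X w : ℂ) (huv : u * v = q') (hQ : q' * Q = 1) :
    (1 - X*u*w) * (X*w - Q*u) = Q*u^2 * ((1 - X*v*w) * (X*w - Q*v)) := by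
  linear_combination (Q*X^2*u*w^2 + Q^2*u - Q^2*X*w*(q' + u*v)) * huv
    + (X^2*u*w^2 + Q*u - X*w*(1 + q'*Q)) * hQ

lemma pairup (q' u v w : ℂ) (hq : q' ≠ 0) (hw : w ≠ 0)
    (huv : u * v = q') (a b : ℤ) (hab : a + b = -1) :
    (1 - q' ^ a * (u * w)) * (1 - q' ^ b * (u * w⁻¹))
      = q'⁻¹ * u ^ 2 * ((1 - q' ^ a * (v * w)) * (1 - q' ^ b * (v * w⁻¹))) := by
  have hX : q' ^ a ≠ 0 := zpow_ne_zero _ hq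
  have hB : ∀ y : ℂ, q' ^ a * w * (1 - q' ^ b * (y * w⁻¹)) = q' ^ a * w - q'⁻¹ * y := by
    intro y
    have h1 : q' ^ a * w * (1 - q' ^ b * (y * w⁻¹))
        = q' ^ a * w - (q' ^ a * q' ^ b) * y * (w * w⁻¹) := by ring
    rw [h1, mul_inv_cancel₀ hw, ← zpow_add₀ hq, hab, zpow_neg_one, mul_one]
  apply mul_left_cancel₀ (mul_ne_zero hX hw)
  calc q' ^ a * w * ((1 - q' ^ a * (u * w)) * (1 - q' ^ b * (u * w⁻¹)))
      = (1 - q' ^ a * u * w) * (q' ^ a * w * (1 - q' ^ b * (u * w⁻¹))) := by ring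
    _ = (1 - q' ^ a * u * w) * (q' ^ a * w - q'⁻¹ * u) := by rw [hB]
    _ = q'⁻¹ * u ^ 2 * ((1 - q' ^ a * v * w) * (q' ^ a * w - q'⁻¹ * v)) :=
        core_id q' q'⁻¹ u v (q' ^ a) w huv (mul_inv_cancel₀ hq)
    _ = q'⁻¹ * u ^ 2 * ((1 - q' ^ a * v * w) * (q' ^ a * w * (1 - q' ^ b * (v * w⁻¹)))) := by
        rw [hB]
    _ = q' ^ a * w * (q'⁻¹ * u ^ 2 * ((1 - q' ^ a * (v * w)) * (1 - q' ^ b * (v * w⁻¹)))) := by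
        ring

lemma Sprime (q : ℝ) (hq0 : 0 < q) (hq1 : q < 1) (τ w : ℂ) (hw : w ≠ 0) (m : ℕ) :
    qpow q (2*τ-1) ^ m
      * (∏ k ∈ Finset.range m, (1 - (q:ℂ)^((k:ℤ)-(m:ℤ)) * (qpow q (1-τ) * w)))
      * (∏ k ∈ Finset.range m, (1 - (q:ℂ)^((k:ℤ)-(m:ℤ)) * ((q:ℂ)^(m:ℤ) * (qpow q (1-τ) * w⁻¹))))
    = (∏ k ∈ Finset.range m, (1 - (q:ℂ)^((k:ℤ)-(m:ℤ)) * (qpow q τ * w)))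
      * (∏ k ∈ Finset.range m, (1 - (q:ℂ)^((k:ℤ)-(m:ℤ)) * ((q:ℂ)^(m:ℤ) * (qpow q τ * w⁻¹)))) := by
  have hq : (q : ℂ) ≠ 0 := by exact_mod_cast hq0.ne'
  set u := qpow q (1-τ) with hu
  set v := qpow q τ with hv
  have huv : u * v = (q : ℂ) := by
    rw [hu, hv, ← qpow_add]
    have h1 : (1 - τ) + τ = ((1:ℤ) : ℂ) := by push_cast; ring
    rw [h1, qpow_intCast q hq0]; simp
  -- normalize inner factors of the second and fourth products
  have hBnorm : ∀ y : ℂ, (∏ k ∈ Finset.range m, (1 - (q:ℂ)^((k:ℤ)-(m:ℤ)) * ((q:ℂ)^(m:ℤ) * (y * w⁻¹))))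
      = ∏ k ∈ Finset.range m, (1 - (q:ℂ)^(k:ℤ) * (y * w⁻¹)) := by
    intro y
    refine Finset.prod_congr rfl fun k _ => ?_
    rw [← mul_assoc, ← zpow_add₀ hq]
    ring_nf
  rw [hBnorm u, hBnorm v]
  -- reflect the second and fourth products
  rw [show (∏ k ∈ Finset.range m, (1 - (q:ℂ)^(k:ℤ) * (u * w⁻¹)))
      = ∏ k ∈ Finset.range m, (1 - (q:ℂ)^((m - 1 - k : ℕ):ℤ) * (u * w⁻¹)) from
    (Finset.prod_range_reflect (fun k => (1 - (q:ℂ)^(k:ℤ) * (u * w⁻¹))) m).symm]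
  rw [show (∏ k ∈ Finset.range m, (1 - (q:ℂ)^(k:ℤ) * (v * w⁻¹)))
      = ∏ k ∈ Finset.range m, (1 - (q:ℂ)^((m - 1 - k : ℕ):ℤ) * (v * w⁻¹)) from
    (Finset.prod_range_reflect (fun k => (1 - (q:ℂ)^(k:ℤ) * (v * w⁻¹))) m).symm]
  rw [mul_assoc, ← Finset.prod_mul_distrib, ← Finset.prod_mul_distrib]
  have hkey : ∀ k ∈ Finset.range m,
      (1 - (q:ℂ)^((k:ℤ)-(m:ℤ)) * (u * w)) * (1 - (q:ℂ)^((m - 1 - k : ℕ):ℤ) * (u * w⁻¹))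
      = ((q:ℂ)⁻¹ * u^2) * ((1 - (q:ℂ)^((k:ℤ)-(m:ℤ)) * (v * w)) * (1 - (q:ℂ)^((m - 1 - k : ℕ):ℤ) * (v * w⁻¹))) := by
    intro k hk
    have hk' : k < m := Finset.mem_range.mp hk
    have hab : ((k:ℤ) - (m:ℤ)) + ((m - 1 - k : ℕ):ℤ) = -1 := by
      have : ((m - 1 - k : ℕ):ℤ) = (m:ℤ) - 1 - k := by omega
      omega
    exact pairup (q:ℂ) u v w hq hw huv _ _ hab
  rw [Finset.prod_congr rfl hkey, Finset.prod_mul_distrib, Finset.prod_const, Finset.card_range]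
  have hpre : qpow q (2*τ-1) ^ m * ((q:ℂ)⁻¹ * u^2) ^ m = 1 := by
    rw [← mul_pow]
    have h2 : (q:ℂ)⁻¹ = qpow q ((-1 : ℤ) : ℂ) := by
      rw [qpow_intCast q hq0, zpow_neg_one]
    rw [h2, hu, sq, ← qpow_add, ← qpow_add, ← qpow_add]
    have h3 : 2*τ-1 + (((-1:ℤ):ℂ) + ((1-τ) + (1-τ))) = 0 := by push_cast; ring
    rw [h3, qpow_zero, one_pow]
  calc qpow q (2*τ-1) ^ m * (((q:ℂ)⁻¹ * u^2) ^ m *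
        ∏ k ∈ Finset.range m, ((1 - (q:ℂ)^((k:ℤ)-(m:ℤ)) * (v * w)) * (1 - (q:ℂ)^((m - 1 - k : ℕ):ℤ) * (v * w⁻¹))))
      = (qpow q (2*τ-1) ^ m * ((q:ℂ)⁻¹ * u^2) ^ m) *
        ∏ k ∈ Finset.range m, ((1 - (q:ℂ)^((k:ℤ)-(m:ℤ)) * (v * w)) * (1 - (q:ℂ)^((m - 1 - k : ℕ):ℤ) * (v * w⁻¹))) := by ring
    _ = ∏ k ∈ Finset.range m, ((1 - (q:ℂ)^((k:ℤ)-(m:ℤ)) * (v * w)) * (1 - (q:ℂ)^((m - 1 - k : ℕ):ℤ) * (v * w⁻¹))) := by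
        rw [hpre, one_mul]
    _ = _ := by rw [Finset.prod_mul_distrib]

lemma KRnat (q : ℝ) (hq0 : 0 < q) (hq1 : q < 1) (τ w : ℂ) (hw : w ≠ 0) (m : ℕ)
    (h1 : poch q (qpow q τ * w) ≠ 0)
    (h2 : poch q (qpow q τ * (w * (q:ℂ)^(-(m:ℤ)))) ≠ 0)
    (h3 : poch q (qpow q τ * w⁻¹) ≠ 0)
    (h4 : poch q (qpow q τ * ((q:ℂ)^(m:ℤ) * w⁻¹)) ≠ 0) :
    qpow q (2*τ-1) ^ m
      * (poch q (qpow q (1-τ) * (w * (q:ℂ)^(-(m:ℤ)))) / poch q (qpow q τ * (w * (q:ℂ)^(-(m:ℤ)))))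
      * (poch q (qpow q (1-τ) * w⁻¹) / poch q (qpow q τ * w⁻¹))
    = (poch q (qpow q (1-τ) * w) / poch q (qpow q τ * w))
      * (poch q (qpow q (1-τ) * ((q:ℂ)^(m:ℤ) * w⁻¹)) / poch q (qpow q τ * ((q:ℂ)^(m:ℤ) * w⁻¹))) := by
  have hq : (q : ℂ) ≠ 0 := by exact_mod_cast hq0.ne'
  have e1 : ∀ c : ℂ, poch q (c * (w * (q:ℂ)^(-(m:ℤ))))
      = (∏ k ∈ Finset.range m, (1 - (q:ℂ)^((k:ℤ)-(m:ℤ)) * (c * w))) * poch q (c * w) := by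
    intro c
    rw [show c * (w * (q:ℂ)^(-(m:ℤ))) = (q:ℂ)^(-(m:ℤ)) * (c * w) from by ring]
    exact poch_shift_neg q hq0 hq1 m (c * w)
  have e2 : ∀ c : ℂ, poch q (c * w⁻¹)
      = (∏ k ∈ Finset.range m, (1 - (q:ℂ)^((k:ℤ)-(m:ℤ)) * ((q:ℂ)^(m:ℤ) * (c * w⁻¹))))
        * poch q (c * ((q:ℂ)^(m:ℤ) * w⁻¹)) := by
    intro c
    have h := poch_shift_neg q hq0 hq1 m ((q:ℂ)^(m:ℤ) * (c * w⁻¹))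
    rw [← mul_assoc, ← zpow_add₀ hq] at h
    simp only [neg_add_cancel, zpow_zero, one_mul] at h
    rw [h]
    congr 2
    ring
  rw [e1 (qpow q (1-τ)), e1 (qpow q τ), e2 (qpow q (1-τ)), e2 (qpow q τ)]
  rw [e1 (qpow q τ)] at h2
  rw [e2 (qpow q τ)] at h3
  set A := ∏ k ∈ Finset.range m, (1 - (q:ℂ)^((k:ℤ)-(m:ℤ)) * (qpow q (1-τ) * w)) with hA
  set B := ∏ k ∈ Finset.range m, (1 - (q:ℂ)^((k:ℤ)-(m:ℤ)) * ((q:ℂ)^(m:ℤ) * (qpow q (1-τ) * w⁻¹))) with hB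
  set C := ∏ k ∈ Finset.range m, (1 - (q:ℂ)^((k:ℤ)-(m:ℤ)) * (qpow q τ * w)) with hC
  set D := ∏ k ∈ Finset.range m, (1 - (q:ℂ)^((k:ℤ)-(m:ℤ)) * ((q:ℂ)^(m:ℤ) * (qpow q τ * w⁻¹))) with hD
  set P1 := poch q (qpow q (1-τ) * w)
  set Q1 := poch q (qpow q τ * w)
  set P2 := poch q (qpow q (1-τ) * ((q:ℂ)^(m:ℤ) * w⁻¹))
  set Q2 := poch q (qpow q τ * ((q:ℂ)^(m:ℤ) * w⁻¹))
  have hC0 : C ≠ 0 := fun h => h2 (by rw [h, zero_mul])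
  have hD0 : D ≠ 0 := fun h => h3 (by rw [h, zero_mul])
  have hQ1 : Q1 ≠ 0 := h1
  have hQ2 : Q2 ≠ 0 := h4
  have hS := Sprime q hq0 hq1 τ w hw m
  rw [← hA, ← hB, ← hC, ← hD] at hS
  field_simp
  linear_combination (P1 * P2) * hS

lemma Knat (q : ℝ) (hq0 : 0 < q) (hq1 : q < 1) (τ : ℂ) (m : ℕ)
    (h1 : poch q (qpow q τ * (q:ℂ)^(m:ℤ)) ≠ 0)
    (h2 : poch q (qpow q τ * (q:ℂ)^(-(m:ℤ))) ≠ 0) :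
    qpow q (2*τ-1) ^ m
      * (poch q (qpow q (1-τ) * (q:ℂ)^(-(m:ℤ))) / poch q (qpow q τ * (q:ℂ)^(-(m:ℤ))))
    = poch q (qpow q (1-τ) * (q:ℂ)^(m:ℤ)) / poch q (qpow q τ * (q:ℂ)^(m:ℤ)) := by
  have hq : (q : ℂ) ≠ 0 := by exact_mod_cast hq0.ne'
  have f1 : ∀ c : ℂ, poch q (c * (q:ℂ)^(-(m:ℤ)))
      = (∏ k ∈ Finset.range m, (1 - (q:ℂ)^((k:ℤ)-(m:ℤ)) * c))
        * ((∏ k ∈ Finset.range m, (1 - (q:ℂ)^((k:ℤ)-(m:ℤ)) * ((q:ℂ)^(m:ℤ) * c)))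
          * poch q (c * (q:ℂ)^(m:ℤ))) := by
    intro c
    rw [mul_comm c]
    rw [poch_shift_neg q hq0 hq1 m c]
    congr 1
    have h := poch_shift_neg q hq0 hq1 m ((q:ℂ)^(m:ℤ) * c)
    rw [← mul_assoc, ← zpow_add₀ hq] at h
    simp only [neg_add_cancel, zpow_zero, one_mul] at h
    rw [h, mul_comm c]
  rw [f1 (qpow q (1-τ)), f1 (qpow q τ)]
  rw [f1 (qpow q τ)] at h2
  have hS := Sprime q hq0 hq1 τ 1 one_ne_zero m
  simp only [mul_one, inv_one] at hS
  set A := ∏ k ∈ Finset.range m, (1 - (q:ℂ)^((k:ℤ)-(m:ℤ)) * qpow q (1-τ)) with hA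
  set B := ∏ k ∈ Finset.range m, (1 - (q:ℂ)^((k:ℤ)-(m:ℤ)) * ((q:ℂ)^(m:ℤ) * qpow q (1-τ))) with hB
  set C := ∏ k ∈ Finset.range m, (1 - (q:ℂ)^((k:ℤ)-(m:ℤ)) * qpow q τ) with hC
  set D := ∏ k ∈ Finset.range m, (1 - (q:ℂ)^((k:ℤ)-(m:ℤ)) * ((q:ℂ)^(m:ℤ) * qpow q τ)) with hD
  set Pm := poch q (qpow q (1-τ) * (q:ℂ)^(m:ℤ))
  set Qm := poch q (qpow q τ * (q:ℂ)^(m:ℤ))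
  have hC0 : C ≠ 0 := fun h => h2 (by rw [h, zero_mul])
  have hD0 : D ≠ 0 := fun h => h2 (by rw [h]; ring)
  field_simp
  linear_combination Pm * hS

lemma qpow_ne_zero' (q : ℝ) (c : ℂ) : qpow q c ≠ 0 := Complex.exp_ne_zero _

lemma KR (q : ℝ) (hq0 : 0 < q) (hq1 : q < 1) (τ w : ℂ) (hw : w ≠ 0) (m : ℤ)
    (h1 : poch q (qpow q τ * w) ≠ 0)
    (h2 : poch q (qpow q τ * (w * (q:ℂ)^(-m))) ≠ 0)
    (h3 : poch q (qpow q τ * w⁻¹) ≠ 0)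
    (h4 : poch q (qpow q τ * ((q:ℂ)^m * w⁻¹)) ≠ 0) :
    qpow q (2*τ-1) ^ m
      * (poch q (qpow q (1-τ) * (w * (q:ℂ)^(-m))) / poch q (qpow q τ * (w * (q:ℂ)^(-m))))
      * (poch q (qpow q (1-τ) * w⁻¹) / poch q (qpow q τ * w⁻¹))
    = (poch q (qpow q (1-τ) * w) / poch q (qpow q τ * w))
      * (poch q (qpow q (1-τ) * ((q:ℂ)^m * w⁻¹)) / poch q (qpow q τ * ((q:ℂ)^m * w⁻¹))) := by
  have hq : (q : ℂ) ≠ 0 := by exact_mod_cast hq0.ne'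
  obtain ⟨k, rfl | rfl⟩ := Int.eq_nat_or_neg m
  · have := KRnat q hq0 hq1 τ w hw k h1 h2 h3 h4
    rw [← zpow_natCast (qpow q (2*τ-1)) k] at this
    exact this
  · simp only [neg_neg] at h2 ⊢
    have hw' : w * (q:ℂ)^(k:ℤ) ≠ 0 := mul_ne_zero hw (zpow_ne_zero _ hq)
    have e1 : w * (q:ℂ)^(k:ℤ) * (q:ℂ)^(-(k:ℤ)) = w := by
      rw [mul_assoc, ← zpow_add₀ hq]; simp
    have e2 : (w * (q:ℂ)^(k:ℤ))⁻¹ = (q:ℂ)^(-(k:ℤ)) * w⁻¹ := by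
      rw [mul_inv, zpow_neg]; ring
    have e3 : (q:ℂ)^(k:ℤ) * (w * (q:ℂ)^(k:ℤ))⁻¹ = w⁻¹ := by
      rw [e2, ← mul_assoc, ← zpow_add₀ hq]; simp
    have hk := KRnat q hq0 hq1 τ (w * (q:ℂ)^(k:ℤ)) hw' k
      (by exact h2) (by rw [e1]; exact h1) (by rw [e2]; exact h4) (by rw [e3]; exact h3)
    rw [e1, e3, e2] at hk
    rw [← zpow_natCast (qpow q (2*τ-1)) k] at hk
    have hnz : qpow q (2*τ-1) ^ (k:ℤ) ≠ 0 := zpow_ne_zero _ (qpow_ne_zero q _)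
    apply mul_left_cancel₀ hnz
    have hinv : qpow q (2*τ-1) ^ (k:ℤ) * qpow q (2*τ-1) ^ (-(k:ℤ)) = 1 := by
      rw [← zpow_add₀ (qpow_ne_zero q _), add_neg_cancel, zpow_zero]
    linear_combination (poch q (qpow q (1-τ) * (w * (q:ℂ)^(k:ℤ))) / poch q (qpow q τ * (w * (q:ℂ)^(k:ℤ)))
      * (poch q (qpow q (1-τ) * w⁻¹) / poch q (qpow q τ * w⁻¹))) * hinv - hk

lemma Kz (q : ℝ) (hq0 : 0 < q) (hq1 : q < 1) (τ : ℂ) (m : ℤ)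
    (h1 : poch q (qpow q τ * (q:ℂ)^m) ≠ 0)
    (h2 : poch q (qpow q τ * (q:ℂ)^(-m)) ≠ 0) :
    qpow q (2*τ-1) ^ m
      * (poch q (qpow q (1-τ) * (q:ℂ)^(-m)) / poch q (qpow q τ * (q:ℂ)^(-m)))
    = poch q (qpow q (1-τ) * (q:ℂ)^m) / poch q (qpow q τ * (q:ℂ)^m) := by
  have hq : (q : ℂ) ≠ 0 := by exact_mod_cast hq0.ne'
  obtain ⟨k, rfl | rfl⟩ := Int.eq_nat_or_neg m
  · have := Knat q hq0 hq1 τ k h1 h2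
    rw [← zpow_natCast (qpow q (2*τ-1)) k] at this
    exact this
  · simp only [neg_neg] at h2 ⊢
    have hk := Knat q hq0 hq1 τ k h2 h1
    rw [← zpow_natCast (qpow q (2*τ-1)) k] at hk
    have hnz : qpow q (2*τ-1) ^ (k:ℤ) ≠ 0 := zpow_ne_zero _ (qpow_ne_zero q _)
    have hinv : qpow q (2*τ-1) ^ (-(k:ℤ)) * qpow q (2*τ-1) ^ ((k:ℤ)) = 1 := by
      rw [← zpow_add₀ (qpow_ne_zero q _), neg_add_cancel, zpow_zero]
    linear_combination (poch q (qpow q (1-τ) * (q:ℂ)^(-(k:ℤ))) / poch q (qpow q τ * (q:ℂ)^(-(k:ℤ)))) * hinv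
      - qpow q (2*τ-1) ^ (-(k:ℤ)) * hk

lemma vdm_swap (n : ℕ) (v : Fin n → ℂ) (i j : Fin n) (hij : i ≠ j) :
    (∏ a : Fin n, ∏ b ∈ Finset.Ioi a, (v (Equiv.swap i j a) - v (Equiv.swap i j b)))
      = - ∏ a : Fin n, ∏ b ∈ Finset.Ioi a, (v a - v b) := by
  have key : ∀ u : Fin n → ℂ, (∏ a : Fin n, ∏ b ∈ Finset.Ioi a, (u a - u b))
      = (∏ a : Fin n, ∏ b ∈ Finset.Ioi a, (-1 : ℂ)) * (Matrix.vandermonde u).det := by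
    intro u
    rw [Matrix.det_vandermonde, ← Finset.prod_mul_distrib]
    refine Finset.prod_congr rfl fun a _ => ?_
    rw [← Finset.prod_mul_distrib]
    refine Finset.prod_congr rfl fun b _ => by ring
  rw [key, key]
  have hsub : Matrix.vandermonde (fun a => v (Equiv.swap i j a))
      = (Matrix.vandermonde v).submatrix (Equiv.swap i j) id := by
    ext a b
    simp [Matrix.vandermonde_apply, Matrix.submatrix_apply]
  rw [hsub, Matrix.det_permute, Equiv.Perm.sign_swap hij]
  push_cast
  ring

lemma prod_Ioi_eq_filter (n : ℕ) (f : Fin n → Fin n → ℂ) :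
    (∏ a : Fin n, ∏ b ∈ Finset.Ioi a, f a b)
      = ∏ p ∈ Finset.univ.filter (fun p : Fin n × Fin n => p.1 < p.2), f p.1 p.2 := by
  rw [Finset.prod_sigma' _ _ (fun a b => f a b)]
  refine Finset.prod_nbij' (fun x => (x.1, x.2)) (fun p => ⟨p.1, p.2⟩) ?_ ?_ ?_ ?_ ?_
  · intro x hx
    simp only [Finset.mem_sigma, Finset.mem_univ, Finset.mem_Ioi, true_and] at hx
    simp [hx]
  · intro p hp
    simp only [Finset.mem_filter, Finset.mem_univ, true_and] at hp
    simp [Finset.mem_sigma, Finset.mem_Ioi, hp]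
  · intro x _; rfl
  · intro p _; rfl
  · intro x _; rfl

lemma prod_swap_G (n : ℕ) (i j : Fin n) (hij : i < j) (G : Fin n → Fin n → ℂ)
    (hpair : ∀ b : Fin n, i < b → b < j → G b i * G j b = G i b * G b j)
    (hdiag : G j i = G i j) :
    (∏ a : Fin n, ∏ b ∈ Finset.Ioi a, G (Equiv.swap i j a) (Equiv.swap i j b))
      = ∏ a : Fin n, ∏ b ∈ Finset.Ioi a, G a b := by
  classical
  have hne : i ≠ j := ne_of_lt hij
  set σ := Equiv.swap i j with hσ
  rw [prod_Ioi_eq_filter n (fun a b => G (σ a) (σ b)), prod_Ioi_eq_filter n G]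
  set S := Finset.univ.filter (fun p : Fin n × Fin n => p.1 < p.2) with hS
  have hmem : ∀ x : Fin n × Fin n, x ∈ S ↔ x.1 < x.2 := by
    intro x; simp [hS]
  set t : Fin n × Fin n → Fin n × Fin n :=
    fun x => if σ x.1 < σ x.2 then (σ x.1, σ x.2) else (σ x.2, σ x.1) with ht
  have hσσ : ∀ a, σ (σ a) = a := fun a => Equiv.swap_apply_self i j a
  have hinj : ∀ a b, σ a = σ b → a = b := fun a b h => σ.injective h
  have htmem : ∀ x ∈ S, t x ∈ S := by
    intro x hx
    rw [hmem] at hx ⊢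
    by_cases h : σ x.1 < σ x.2
    · simp [ht, h]
    · simp only [ht, if_neg h]
      have hij' : σ x.1 ≠ σ x.2 := fun hc => (ne_of_lt hx) (hinj _ _ hc)
      exact lt_of_le_of_ne (not_lt.mp h) (Ne.symm hij')
  have htt : ∀ x ∈ S, t (t x) = x := by
    intro x hx
    rw [hmem] at hx
    by_cases h : σ x.1 < σ x.2
    · simp only [ht, if_pos h, hσσ, if_pos hx]
    · simp only [ht, if_neg h, hσσ]
      rw [if_neg (by exact fun hc => absurd hx (not_lt.mpr hc.le))]
  have step1 : (∏ x ∈ S, G (σ x.1) (σ x.2)) = ∏ x ∈ S, G (σ (t x).1) (σ (t x).2) :=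
    (Finset.prod_nbij' t t htmem htmem htt htt (fun x _ => rfl)).symm
  rw [step1]
  have step2 : ∀ x ∈ S, G (σ (t x).1) (σ (t x).2)
      = if σ x.1 < σ x.2 then G x.1 x.2 else G x.2 x.1 := by
    intro x hx
    by_cases h : σ x.1 < σ x.2
    · simp [ht, h, hσσ]
    · simp [ht, h, hσσ]
  rw [Finset.prod_congr rfl step2]
  rw [Finset.prod_ite]
  rw [← Finset.prod_filter_mul_prod_filter_not S (fun x => σ x.1 < σ x.2) (fun x => G x.1 x.2)]
  congr 1
  have hsi : σ i = j := Equiv.swap_apply_left i j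
  have hsj : σ j = i := Equiv.swap_apply_right i j
  have hso : ∀ a : Fin n, a ≠ i → a ≠ j → σ a = a := fun a => Equiv.swap_apply_of_ne_of_ne
  have hBad : Finset.filter (fun x => ¬σ x.1 < σ x.2) S
      = ({((i, j) : Fin n × Fin n)}
          ∪ (Finset.Ioo i j).image (fun b => ((i, b) : Fin n × Fin n)))
        ∪ (Finset.Ioo i j).image (fun b => ((b, j) : Fin n × Fin n)) := by
    ext x
    obtain ⟨x1, x2⟩ := x
    simp only [Finset.mem_filter, hmem, Finset.mem_union, Finset.mem_singleton,
      Finset.mem_image, Finset.mem_Ioo, Prod.mk.injEq]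
    constructor
    · rintro ⟨hlt, hnot⟩
      by_cases h1 : x1 = i
      · by_cases h2 : x2 = j
        · exact Or.inl (Or.inl ⟨h1, h2⟩)
        · refine Or.inl (Or.inr ⟨x2, ⟨h1 ▸ hlt, ?_⟩, h1.symm, rfl⟩)
          have hx2i : x2 ≠ i := h1 ▸ ne_of_gt hlt
          rw [h1, hsi, hso x2 hx2i h2] at hnot
          exact lt_of_le_of_ne (not_lt.mp hnot) h2
      · by_cases h2 : x2 = j
        · refine Or.inr ⟨x1, ⟨?_, h2 ▸ hlt⟩, rfl, h2.symm⟩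
          have h3 : x1 ≠ j := h2 ▸ ne_of_lt hlt
          rw [h2, hsj, hso x1 h1 h3] at hnot
          exact lt_of_le_of_ne (not_lt.mp hnot) (Ne.symm h1)
        · exfalso
          by_cases h3 : x1 = j
          · subst h3
            have h4 : x2 ≠ i := ne_of_gt (lt_trans hij hlt)
            rw [hsj, hso x2 h4 h2] at hnot
            exact hnot (lt_trans hij hlt)
          · by_cases h4 : x2 = i
            · subst h4
              have h5 : x1 ≠ j := ne_of_lt (lt_trans hlt hij)
              rw [hsi, hso x1 h1 h5] at hnot
              exact hnot (lt_trans hlt hij)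
            · rw [hso x1 h1 h3, hso x2 h4 h2] at hnot
              exact hnot hlt
    · rintro ((⟨e1, e2⟩ | ⟨b, ⟨hb1, hb2⟩, e1, e2⟩) | ⟨b, ⟨hb1, hb2⟩, e1, e2⟩)
      · subst e1; subst e2
        rw [hsi, hsj]
        exact ⟨hij, not_lt.mpr (le_of_lt hij)⟩
      · subst e1; subst e2
        rw [hsi, hso b (ne_of_gt hb1) (ne_of_lt hb2)]
        exact ⟨hb1, not_lt.mpr (le_of_lt hb2)⟩
      · subst e1; subst e2
        rw [hsj, hso b (ne_of_gt hb1) (ne_of_lt hb2)]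
        exact ⟨hb2, not_lt.mpr (le_of_lt hb1)⟩
  rw [hBad]
  have hd1 : Disjoint ({((i, j) : Fin n × Fin n)})
      ((Finset.Ioo i j).image (fun b => ((i, b) : Fin n × Fin n))) := by
    simp only [Finset.disjoint_singleton_left, Finset.mem_image, Finset.mem_Ioo,
      Prod.mk.injEq, not_exists]
    rintro b ⟨⟨hb1, hb2⟩, _, e2⟩
    exact absurd e2 (ne_of_lt hb2)
  have hd2 : Disjoint (({((i, j) : Fin n × Fin n)}
        ∪ (Finset.Ioo i j).image (fun b => ((i, b) : Fin n × Fin n))))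
      ((Finset.Ioo i j).image (fun b => ((b, j) : Fin n × Fin n))) := by
    rw [Finset.disjoint_union_left]
    constructor
    · simp only [Finset.disjoint_singleton_left, Finset.mem_image, Finset.mem_Ioo,
        Prod.mk.injEq, not_exists]
      rintro b ⟨⟨hb1, hb2⟩, e1, _⟩
      exact absurd e1 (ne_of_gt hb1)
    · rw [Finset.disjoint_left]
      rintro ⟨xa, xb⟩ hx1 hx2
      simp only [Finset.mem_image, Finset.mem_Ioo, Prod.mk.injEq] at hx1 hx2
      obtain ⟨b, ⟨hb1, hb2⟩, e1, e2⟩ := hx1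
      obtain ⟨c, ⟨hc1, hc2⟩, f1, f2⟩ := hx2
      rw [← e1] at f1
      exact absurd f1 (ne_of_gt hc1)
  have hinj1 : ∀ b ∈ Finset.Ioo i j, ∀ c ∈ Finset.Ioo i j,
      ((i, b) : Fin n × Fin n) = (i, c) → b = c := by
    intro b _ c _ h
    simpa [Prod.mk.injEq] using h
  have hinj2 : ∀ b ∈ Finset.Ioo i j, ∀ c ∈ Finset.Ioo i j,
      ((b, j) : Fin n × Fin n) = (c, j) → b = c := by
    intro b _ c _ h
    simpa [Prod.mk.injEq] using h
  rw [Finset.prod_union hd2, Finset.prod_union hd1,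
      Finset.prod_union hd2, Finset.prod_union hd1,
      Finset.prod_singleton, Finset.prod_singleton,
      Finset.prod_image hinj1, Finset.prod_image hinj2,
      Finset.prod_image hinj1, Finset.prod_image hinj2]
  simp only []
  rw [hdiag, mul_assoc, mul_assoc, ← Finset.prod_mul_distrib, ← Finset.prod_mul_distrib]
  congr 1
  refine Finset.prod_congr rfl fun b hb => ?_
  rw [Finset.mem_Ioo] at hb
  exact hpair b hb.1 hb.2

lemma Apsi_swap (q : ℝ) (hq0 : 0 < q) (hq1 : q < 1) (n : ℕ) (α τ a₁ b₁ : ℂ)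
    (l : Fin n → ℂ) (hwd : AWellDef q n τ b₁ l) (i j : Fin n) (hij : i < j)
    (hbranch : l i = l j) (ν : Fin n → ℤ) :
    Apsi q n α τ a₁ b₁ l (fun k => ν (Equiv.swap i j k)) = - Apsi q n α τ a₁ b₁ l ν := by
  have hq : (q : ℂ) ≠ 0 := by exact_mod_cast hq0.ne'
  have hne : i ≠ j := ne_of_lt hij
  set σ := Equiv.swap i j with hσ
  have hl : ∀ k, l (σ k) = l k := by
    intro k
    rcases eq_or_ne k i with rfl | h1
    · rw [hσ, Equiv.swap_apply_left]; exact hbranch.symm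
    · rcases eq_or_ne k j with rfl | h2
      · rw [hσ, Equiv.swap_apply_right]; exact hbranch
      · rw [hσ, Equiv.swap_apply_of_ne_of_ne h1 h2]
  have hνσi : ν (σ i) = ν j := by rw [hσ, Equiv.swap_apply_left]
  have hνσj : ν (σ j) = ν i := by rw [hσ, Equiv.swap_apply_right]
  simp only [Apsi]
  -- Part 1
  have h1 : (∏ k : Fin n, Complex.exp (α * l k) * qpow q α ^ (ν (σ k)) *
        (poch q ((q : ℂ) * a₁⁻¹ * (Complex.exp (l k) * (q : ℂ) ^ (ν (σ k)))) /
          poch q (b₁ * (Complex.exp (l k) * (q : ℂ) ^ (ν (σ k))))))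
      = ∏ k : Fin n, Complex.exp (α * l k) * qpow q α ^ ν k *
        (poch q ((q : ℂ) * a₁⁻¹ * (Complex.exp (l k) * (q : ℂ) ^ ν k)) /
          poch q (b₁ * (Complex.exp (l k) * (q : ℂ) ^ ν k))) := by
    rw [← Equiv.prod_comp σ (fun k => Complex.exp (α * l k) * qpow q α ^ ν k *
        (poch q ((q : ℂ) * a₁⁻¹ * (Complex.exp (l k) * (q : ℂ) ^ ν k)) /
          poch q (b₁ * (Complex.exp (l k) * (q : ℂ) ^ ν k))))]
    refine Finset.prod_congr rfl fun k _ => ?_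
    simp only [hl k]
  -- Part 2
  set G : Fin n → Fin n → ℂ := fun a b =>
    Complex.exp ((2 * τ - 1) * l a) * qpow q (2 * τ - 1) ^ ν a *
      (poch q (qpow q (1 - τ) *
          (Complex.exp (l b) * (q : ℂ) ^ ν b / (Complex.exp (l a) * (q : ℂ) ^ ν a))) /
        poch q (qpow q τ *
          (Complex.exp (l b) * (q : ℂ) ^ ν b / (Complex.exp (l a) * (q : ℂ) ^ ν a)))) with hG
  have hsplit : qpow q (2*τ-1) ^ (ν j)
      = qpow q (2*τ-1) ^ (ν i) * qpow q (2*τ-1) ^ (ν j - ν i) := by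
    rw [← zpow_add₀ (qpow_ne_zero q _)]
    congr 1
    ring
  have hdiag : G j i = G i j := by
    have hQ1 := (hwd ν).2 i j hij
    have hQ2 := (hwd (fun k => ν (σ k))).2 i j hij
    simp only [hνσi, hνσj] at hQ2
    have em1 : Complex.exp (l j) * (q:ℂ)^(ν j) / (Complex.exp (l i) * (q:ℂ)^(ν i))
        = (q:ℂ)^(ν j - ν i) := by
      rw [← hbranch, zpow_sub₀ hq]
      rw [mul_div_mul_left _ _ (Complex.exp_ne_zero _)]
    have em2 : Complex.exp (l j) * (q:ℂ)^(ν i) / (Complex.exp (l i) * (q:ℂ)^(ν j))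
        = (q:ℂ)^(-(ν j - ν i)) := by
      rw [← hbranch, neg_sub, zpow_sub₀ hq]
      rw [mul_div_mul_left _ _ (Complex.exp_ne_zero _)]
    have em3 : Complex.exp (l i) * (q:ℂ)^(ν i) / (Complex.exp (l j) * (q:ℂ)^(ν j))
        = (q:ℂ)^(-(ν j - ν i)) := by
      rw [← hbranch, neg_sub, zpow_sub₀ hq]
      rw [mul_div_mul_left _ _ (Complex.exp_ne_zero _)]
    rw [em1] at hQ1
    rw [em2] at hQ2
    have hkz := Kz q hq0 hq1 τ (ν j - ν i) hQ1 hQ2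
    simp only [hG]
    rw [em1, em3, ← hbranch, hsplit]
    linear_combination (Complex.exp ((2*τ-1) * l i) * qpow q (2*τ-1) ^ (ν i)) * hkz
  have hpair : ∀ b : Fin n, i < b → b < j → G b i * G j b = G i b * G b j := by
    intro b hib hbj
    have hbi : b ≠ i := ne_of_gt hib
    have hbjne : b ≠ j := ne_of_lt hbj
    have hνσb : ν (σ b) = ν b := by rw [hσ, Equiv.swap_apply_of_ne_of_ne hbi hbjne]
    set w := Complex.exp (l b) * (q:ℂ)^(ν b) / (Complex.exp (l i) * (q:ℂ)^(ν i)) with hwdef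
    have hw : w ≠ 0 := div_ne_zero
      (mul_ne_zero (Complex.exp_ne_zero _) (zpow_ne_zero _ hq))
      (mul_ne_zero (Complex.exp_ne_zero _) (zpow_ne_zero _ hq))
    have e_inv : Complex.exp (l i) * (q:ℂ)^(ν i) / (Complex.exp (l b) * (q:ℂ)^(ν b))
        = w⁻¹ := by rw [hwdef, inv_div]
    have e_m : Complex.exp (l b) * (q:ℂ)^(ν b) / (Complex.exp (l i) * (q:ℂ)^(ν j))
        = w * (q:ℂ)^(-(ν j - ν i)) := by
      rw [hwdef, neg_sub, zpow_sub₀ hq, div_mul_div_comm, div_eq_div_iff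
        (mul_ne_zero (Complex.exp_ne_zero _) (zpow_ne_zero _ hq))
        (mul_ne_zero (mul_ne_zero (Complex.exp_ne_zero _) (zpow_ne_zero _ hq)) (zpow_ne_zero _ hq))]
      ring
    have e_qm : Complex.exp (l i) * (q:ℂ)^(ν j) / (Complex.exp (l b) * (q:ℂ)^(ν b))
        = (q:ℂ)^(ν j - ν i) * w⁻¹ := by
      rw [hwdef, inv_div, zpow_sub₀ hq, div_mul_div_comm, div_eq_div_iff
        (mul_ne_zero (Complex.exp_ne_zero _) (zpow_ne_zero _ hq))
        (mul_ne_zero (zpow_ne_zero _ hq) (mul_ne_zero (Complex.exp_ne_zero _) (zpow_ne_zero _ hq)))]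
      ring
    have hQ1 := (hwd ν).2 i b hib
    have hQ2 := (hwd (fun k => ν (σ k))).2 i b hib
    simp only [hνσi, hνσb] at hQ2
    have hQ3 := (hwd (fun k => ν (σ k))).2 b j hbj
    simp only [hνσj, hνσb] at hQ3
    have hQ4 := (hwd ν).2 b j hbj
    rw [← hwdef] at hQ1
    rw [e_m] at hQ2
    rw [← hbranch, e_inv] at hQ3
    rw [← hbranch, e_qm] at hQ4
    have hKR := KR q hq0 hq1 τ w hw (ν j - ν i) hQ1 hQ2 hQ3 hQ4
    simp only [hG]
    rw [← hbranch, e_inv, e_m, e_qm, ← hwdef, hsplit]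
    linear_combination (Complex.exp ((2*τ-1) * l b) * qpow q (2*τ-1) ^ (ν b)
      * Complex.exp ((2*τ-1) * l i) * qpow q (2*τ-1) ^ (ν i)) * hKR
  have h2 : (∏ a : Fin n, ∏ b ∈ Finset.Ioi a,
        Complex.exp ((2 * τ - 1) * l a) * qpow q (2 * τ - 1) ^ (ν (σ a)) *
          (poch q (qpow q (1 - τ) *
              (Complex.exp (l b) * (q : ℂ) ^ (ν (σ b)) / (Complex.exp (l a) * (q : ℂ) ^ (ν (σ a))))) /
            poch q (qpow q τ *
              (Complex.exp (l b) * (q : ℂ) ^ (ν (σ b)) / (Complex.exp (l a) * (q : ℂ) ^ (ν (σ a)))))))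
      = ∏ a : Fin n, ∏ b ∈ Finset.Ioi a,
        Complex.exp ((2 * τ - 1) * l a) * qpow q (2 * τ - 1) ^ ν a *
          (poch q (qpow q (1 - τ) *
              (Complex.exp (l b) * (q : ℂ) ^ ν b / (Complex.exp (l a) * (q : ℂ) ^ ν a))) /
            poch q (qpow q τ *
              (Complex.exp (l b) * (q : ℂ) ^ ν b / (Complex.exp (l a) * (q : ℂ) ^ ν a)))) := by
    have hstep : ∀ a : Fin n, ∀ b ∈ Finset.Ioi a,
        Complex.exp ((2 * τ - 1) * l a) * qpow q (2 * τ - 1) ^ (ν (σ a)) *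
          (poch q (qpow q (1 - τ) *
              (Complex.exp (l b) * (q : ℂ) ^ (ν (σ b)) / (Complex.exp (l a) * (q : ℂ) ^ (ν (σ a))))) /
            poch q (qpow q τ *
              (Complex.exp (l b) * (q : ℂ) ^ (ν (σ b)) / (Complex.exp (l a) * (q : ℂ) ^ (ν (σ a))))))
        = G (σ a) (σ b) := by
      intro a b _
      simp only [hG, hl a, hl b]
    calc (∏ a : Fin n, ∏ b ∈ Finset.Ioi a,
        Complex.exp ((2 * τ - 1) * l a) * qpow q (2 * τ - 1) ^ (ν (σ a)) *
          (poch q (qpow q (1 - τ) *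
              (Complex.exp (l b) * (q : ℂ) ^ (ν (σ b)) / (Complex.exp (l a) * (q : ℂ) ^ (ν (σ a))))) /
            poch q (qpow q τ *
              (Complex.exp (l b) * (q : ℂ) ^ (ν (σ b)) / (Complex.exp (l a) * (q : ℂ) ^ (ν (σ a)))))))
        = ∏ a : Fin n, ∏ b ∈ Finset.Ioi a, G (σ a) (σ b) :=
          Finset.prod_congr rfl fun a _ => Finset.prod_congr rfl fun b hb => hstep a b hb
      _ = ∏ a : Fin n, ∏ b ∈ Finset.Ioi a, G a b := prod_swap_G n i j hij G hpair hdiag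
      _ = _ := by simp only [hG]
  -- Part 3
  have h3 : (∏ a : Fin n, ∏ b ∈ Finset.Ioi a,
        (Complex.exp (l a) * (q : ℂ) ^ (ν (σ a)) - Complex.exp (l b) * (q : ℂ) ^ (ν (σ b))))
      = - ∏ a : Fin n, ∏ b ∈ Finset.Ioi a,
        (Complex.exp (l a) * (q : ℂ) ^ ν a - Complex.exp (l b) * (q : ℂ) ^ ν b) := by
    have hstep : ∀ a : Fin n, ∀ b ∈ Finset.Ioi a,
        (Complex.exp (l a) * (q : ℂ) ^ (ν (σ a)) - Complex.exp (l b) * (q : ℂ) ^ (ν (σ b)))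
        = (Complex.exp (l (σ a)) * (q : ℂ) ^ (ν (σ a)) - Complex.exp (l (σ b)) * (q : ℂ) ^ (ν (σ b))) := by
      intro a b _
      rw [hl a, hl b]
    rw [Finset.prod_congr rfl (fun a _ => Finset.prod_congr rfl fun b hb => hstep a b hb)]
    exact vdm_swap n (fun k => Complex.exp (l k) * (q : ℂ) ^ ν k) i j hne
  rw [h1, h2, h3]
  ring


/-- Lemma 3.1: if `τ` is not a positive integer and two coordinates of the base point
(together with their branches) coincide, then the A-type Jackson integral vanishes. -/
theorem statement3 (q : ℝ) (hq0 : 0 < q) (hq1 : q < 1) (n : ℕ) (hn : 1 ≤ n)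
    (α τ : ℂ) (hτ : ∀ m : ℕ, 0 < m → τ ≠ (m : ℂ))
    (a₁ b₁ : ℂ) (ha₁ : a₁ ≠ 0) (hb₁ : b₁ ≠ 0)
    (l : Fin n → ℂ)
    (hsum : Summable fun ν : Fin n → ℤ => Apsi q n α τ a₁ b₁ l ν)
    (hwd : AWellDef q n τ b₁ l)
    (i j : Fin n) (hij : i < j) (hbranch : l i = l j) :
    AInt q n α τ a₁ b₁ l = 0 := by
  have key : ∀ ν : Fin n → ℤ, Apsi q n α τ a₁ b₁ l (fun k => ν (Equiv.swap i j k))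
      = - Apsi q n α τ a₁ b₁ l ν :=
    Apsi_swap q hq0 hq1 n α τ a₁ b₁ l hwd i j hij hbranch
  have hinvol : ∀ ν : Fin n → ℤ,
      (fun k => (fun k' => ν (Equiv.swap i j k')) (Equiv.swap i j k)) = ν := by
    intro ν; funext k; simp [Equiv.swap_apply_self]
  let e : (Fin n → ℤ) ≃ (Fin n → ℤ) :=
    ⟨fun ν k => ν (Equiv.swap i j k), fun ν k => ν (Equiv.swap i j k), hinvol, hinvol⟩
  have hT : (∑' ν : Fin n → ℤ, Apsi q n α τ a₁ b₁ l ν) = 0 := by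
    have h1 : ∑' ν : Fin n → ℤ, Apsi q n α τ a₁ b₁ l (e ν)
        = ∑' ν : Fin n → ℤ, Apsi q n α τ a₁ b₁ l ν := e.tsum_eq _
    have h2 : ∑' ν : Fin n → ℤ, Apsi q n α τ a₁ b₁ l (e ν)
        = ∑' ν : Fin n → ℤ, - Apsi q n α τ a₁ b₁ l ν := tsum_congr fun ν => key ν
    rw [tsum_neg] at h2
    have h3 := h1.symm.trans h2
    linear_combination h3 / 2
  rw [AInt, hT, mul_zero]
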